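/- Let α ∈ (0,1), λ > 0, g a positive integer, and t̃ a real number satisfying (λ(1-α)(g-1))^{1/(1-α)} < t̃ ≤ (λ(1-α)g)^{1/(1-α)}. Then t̃ - (λ(1-α)(g-1))^{1/(1-α)} ≤ λ t̃^α · (t̃^{1-α}/(λ(1-α)) - g + 1). -/

import Mathlib

lemma key_rpow_sub (p a u : ℝ) (hp : 1 ≤ p) (ha : 0 ≤ a) (hau : a ≤ u) (hu : 0 < u) :
    u ^ p - a ^ p ≤ p * u ^ (p - 1) * (u - a) := by
  have hs : (-1 : ℝ) ≤ a / u - 1 := by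
    have : 0 ≤ a / u := div_nonneg ha hu.le
    linarith
  have hb := one_add_mul_self_le_rpow_one_add hs hp
  have h1 : (1 : ℝ) + (a / u - 1) = a / u := by ring
  rw [h1] at hb
  -- hb : 1 + p * (a/u - 1) ≤ (a/u)^p
  have h2 : (a / u) ^ p = a ^ p / u ^ p := Real.div_rpow ha hu.le p
  rw [h2] at hb
  have hup : (0 : ℝ) < u ^ p := Real.rpow_pos_of_pos hu p
  have hb' : (1 + p * (a / u - 1)) * u ^ p ≤ a ^ p := (le_div_iff₀ hup).mp hb
  have hupm : u ^ (p - 1) * u = u ^ p := by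
    have h := (Real.rpow_add hu (p - 1) 1).symm
    simpa using h
  have hupm' : u ^ p = u ^ (p - 1) * u := hupm.symm
  have hud : u ^ p / u = u ^ (p - 1) := by
    field_simp [hupm']
    rw [hupm']; ring
  have key : u ^ p - a ^ p ≤ p * (u ^ p / u) * (u - a) := by
    have : (1 + p * (a / u - 1)) * u ^ p = u ^ p + p * (u ^ p / u) * (a - u) := by
      field_simp
    nlinarith [hb']
  rw [hud] at key
  exact key

/-- Inequality (13) of the SW-UCB# analysis. -/
theorem stmt_4 (α lam : ℝ) (hα : α ∈ Set.Ioo (0 : ℝ) 1) (hlam : 0 < lam)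
    (g : ℕ) (hg : 0 < g) (t : ℝ)
    (h₁ : (lam * (1 - α) * ((g : ℝ) - 1)) ^ (1 / (1 - α)) < t)
    (h₂ : t ≤ (lam * (1 - α) * (g : ℝ)) ^ (1 / (1 - α))) :
    t - (lam * (1 - α) * ((g : ℝ) - 1)) ^ (1 / (1 - α)) ≤
      lam * t ^ α * (t ^ (1 - α) / (lam * (1 - α)) - (g : ℝ) + 1) := by
  obtain ⟨hα0, hα1⟩ := hα
  set β := 1 - α with hβdef
  have hβ : 0 < β := by simp [hβdef]; linarith
  have hg1 : (1 : ℝ) ≤ (g : ℝ) := by exact_mod_cast hg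
  have ha : 0 ≤ lam * β * ((g : ℝ) - 1) := by
    apply mul_nonneg (by positivity) (by linarith)
  set a := lam * β * ((g : ℝ) - 1) with hadef
  have ht : 0 < t := lt_of_le_of_lt (Real.rpow_nonneg ha _) h₁
  set u := t ^ β with hudef
  have hu : 0 < u := Real.rpow_pos_of_pos ht β
  have hp : 1 ≤ 1 / β := by
    rw [le_div_iff₀ hβ]; linarith
  have hau : a ≤ u := by
    by_contra hc
    push_neg at hc
    have : u ^ (1 / β) < a ^ (1 / β) :=
      Real.rpow_lt_rpow hu.le hc (by positivity)
    rw [hudef, ← Real.rpow_mul ht.le] at this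
    rw [mul_one_div, div_self hβ.ne', Real.rpow_one] at this
    linarith
  have key := key_rpow_sub (1 / β) a u hp ha hau hu
  have hup : u ^ (1 / β) = t := by
    rw [hudef, ← Real.rpow_mul ht.le, mul_one_div, div_self hβ.ne', Real.rpow_one]
  have hum : u ^ (1 / β - 1) = t ^ α := by
    rw [hudef, ← Real.rpow_mul ht.le]
    congr 1
    field_simp [hβdef]
    linarith
  rw [hup, hum] at key
  -- key : t - a ^ (1/β) ≤ (1/β) * t^α * (u - a)
  have hgoal : lam * t ^ α * (t ^ (1 - α) / (lam * (1 - α)) - (g : ℝ) + 1)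
      = (1 / β) * t ^ α * (u - a) := by
    rw [hudef, hadef, hβdef]
    field_simp
    ring
  rw [hgoal]
  exact key
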